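/- The conditional probability path p_t = N(t x₁ + (1−t) x₀, σ² I_d) with conditional vector field u_t(x | x₀, x₁) = x₁ − x₀ satisfies the continuity equation ∂_t p_t + ∇·(p_t u_t) = 0 on ℝ^d for t ∈ (0,1). -/

import Mathlib

/-- Density of `N(t x₁ + (1-t) x₀, σ² I_d)` at `x`. -/
noncomputable def gaussPath (d : ℕ) (x₀ x₁ : Fin d → ℝ) (σ : ℝ) (t : ℝ)
    (x : Fin d → ℝ) : ℝ :=
  (2 * Real.pi * σ ^ 2) ^ (-(d : ℝ) / 2) *
    Real.exp (-(∑ i, (x i - ((1 - t) * x₀ i + t * x₁ i)) ^ 2) / (2 * σ ^ 2))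

theorem gauss_path_continuity_equation (d : ℕ) (x₀ x₁ : Fin d → ℝ) (σ : ℝ)
    (hσ : 0 < σ) :
    ∀ t ∈ Set.Ioo (0:ℝ) 1, ∀ x : Fin d → ℝ,
      deriv (fun s => gaussPath d x₀ x₁ σ s x) t +
        ∑ i, deriv
          (fun xi => gaussPath d x₀ x₁ σ t (Function.update x i xi) *
            (x₁ i - x₀ i)) (x i) = 0 := by
  intro t ht x
  set C : ℝ := (2 * Real.pi * σ ^ 2) ^ (-(d : ℝ) / 2) with hC
  set μ : Fin d → ℝ := fun i => (1 - t) * x₀ i + t * x₁ i with hμ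
  have hσ2 : (2 * σ ^ 2) ≠ 0 := by positivity
  -- time derivative
  have h1 : ∀ i : Fin d, HasDerivAt
      (fun s : ℝ => (x i - ((1 - s) * x₀ i + s * x₁ i)) ^ 2)
      (2 * (x i - μ i) * (x₀ i - x₁ i)) t := by
    intro i
    have hlin : HasDerivAt (fun s : ℝ => x i - ((1 - s) * x₀ i + s * x₁ i))
        (x₀ i - x₁ i) t := by
      have h : HasDerivAt (fun s : ℝ => x i - ((1 - s) * x₀ i + s * x₁ i))
          (0 - ((0 - 1) * x₀ i + 1 * x₁ i)) t := by
        exact (hasDerivAt_const t (x i)).sub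
          ((((hasDerivAt_const t (1:ℝ)).sub (hasDerivAt_id t)).mul_const (x₀ i)).add
            ((hasDerivAt_id t).mul_const (x₁ i)))
      convert h using 1; ring
    have := hlin.fun_pow 2
    refine this.congr_deriv ?_
    simp [hμ]; try ring
  have hS : HasDerivAt (fun s : ℝ => ∑ i, (x i - ((1 - s) * x₀ i + s * x₁ i)) ^ 2)
      (∑ i, 2 * (x i - μ i) * (x₀ i - x₁ i)) t :=
    HasDerivAt.fun_sum (fun i _ => h1 i)
  have hT : HasDerivAt (fun s => gaussPath d x₀ x₁ σ s x)
      (C * (Real.exp (-(∑ i, (x i - μ i) ^ 2) / (2 * σ ^ 2)) *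
        ((-(∑ i, 2 * (x i - μ i) * (x₀ i - x₁ i))) / (2 * σ ^ 2)))) t := by
    have := ((hS.neg.div_const (2 * σ ^ 2)).exp).const_mul C
    simpa [gaussPath, hμ] using this
  -- space derivatives
  have hXi : ∀ i : Fin d, HasDerivAt
      (fun xi => gaussPath d x₀ x₁ σ t (Function.update x i xi) * (x₁ i - x₀ i))
      ((C * (Real.exp (-(∑ j, (x j - μ j) ^ 2) / (2 * σ ^ 2)) *
        ((-(2 * (x i - μ i))) / (2 * σ ^ 2)))) * (x₁ i - x₀ i)) (x i) := by
    intro i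
    have hterm : ∀ j : Fin d, HasDerivAt
        (fun xi => (Function.update x i xi j - μ j) ^ 2)
        (if j = i then 2 * (x i - μ i) else 0) (x i) := by
      intro j
      by_cases hji : j = i
      · subst hji
        simp only [Function.update_self, if_pos rfl]
        have := ((hasDerivAt_id (x j)).sub_const (μ j)).fun_pow 2
        refine this.congr_deriv ?_
        simp; try ring
      · simp only [if_neg hji]
        have : (fun xi => (Function.update x i xi j - μ j) ^ 2) =
            fun _ : ℝ => (x j - μ j) ^ 2 := by
          funext xi
          rw [Function.update_of_ne hji]
        rw [this]
        exact hasDerivAt_const _ _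
    have hSx : HasDerivAt (fun xi => ∑ j, (Function.update x i xi j - μ j) ^ 2)
        (2 * (x i - μ i)) (x i) := by
      have := HasDerivAt.fun_sum (fun j (_ : j ∈ Finset.univ) => hterm j)
      simpa using this
    have := (((hSx.neg.div_const (2 * σ ^ 2)).exp).const_mul C).mul_const (x₁ i - x₀ i)
    have heq : (fun xi => gaussPath d x₀ x₁ σ t (Function.update x i xi) * (x₁ i - x₀ i))
        = fun xi => C * Real.exp (-(∑ j, (Function.update x i xi j - μ j) ^ 2) / (2 * σ ^ 2))
            * (x₁ i - x₀ i) := by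
      funext xi; simp [gaussPath, hμ, hC]
    rw [heq]
    simpa [hμ] using this
  rw [hT.deriv]
  rw [Finset.sum_congr rfl (fun i _ => (hXi i).deriv)]
  set A : ℝ := C * Real.exp (-(∑ j, (x j - μ j) ^ 2) / (2 * σ ^ 2)) with hA
  have h2 : ∑ i, (C * (Real.exp (-(∑ j, (x j - μ j) ^ 2) / (2 * σ ^ 2)) *
        ((-(2 * (x i - μ i))) / (2 * σ ^ 2)))) * (x₁ i - x₀ i)
      = ∑ i, A * ((2 * (x i - μ i) * (x₀ i - x₁ i)) / (2 * σ ^ 2)) := by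
    apply Finset.sum_congr rfl
    intro i _
    rw [hA]; field_simp; try ring
  rw [h2, ← Finset.mul_sum, ← Finset.sum_div]
  have : C * (Real.exp (-(∑ i, (x i - μ i) ^ 2) / (2 * σ ^ 2)) *
      ((-(∑ i, 2 * (x i - μ i) * (x₀ i - x₁ i))) / (2 * σ ^ 2))) = 
      A * ((-(∑ i, 2 * (x i - μ i) * (x₀ i - x₁ i))) / (2 * σ ^ 2)) := by
    rw [hA]; ring
  rw [this]
  ring
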